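/- If a polynomial f(x,y) = ∏_{j=1}^{2k} (x-α_j)(y-β_j)(x-y-γ_j)(x+y-δ_j) over ℝ vanishes at every point of the grid S × S where S = {-2k,…,2k}, a contradiction arises; equivalently, no such product of 8k real lines (2k of each of the four slopes 0, ∞, +1, -1) can cover all (4k+1)² points of the grid S × S. -/

import Mathlib

open Polynomial Finset

namespace Stmt13Aux


noncomputable def gw (S : Finset ℤ) (s : ℤ) : ℝ :=
  ∏ t ∈ S.erase s, ((s : ℝ) - (t : ℝ))⁻¹

lemma injOn_cast (S : Finset ℤ) : Set.InjOn (fun i : ℤ => (i : ℝ)) ↑S :=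
  fun a _ b _ h => by simpa using Int.cast_injective h

lemma coeff_basis (S : Finset ℤ) {i : ℤ} (hi : i ∈ S) :
    (Lagrange.basis S (fun i : ℤ => (i : ℝ)) i).coeff (S.card - 1) = gw S i := by
  have hinj := injOn_cast S
  have hnd := Lagrange.natDegree_basis hinj hi
  rw [← hnd, Polynomial.coeff_natDegree]
  unfold Lagrange.basis
  rw [Polynomial.leadingCoeff_prod]
  unfold gw
  refine Finset.prod_congr rfl fun j hj => ?_
  have hne : (i : ℝ) ≠ (j : ℝ) := by
    have h1 := (Finset.mem_erase.mp hj).1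
    intro h; exact h1 (by exact_mod_cast h.symm)
  unfold Lagrange.basisDivisor
  rw [leadingCoeff_mul, leadingCoeff_C, (monic_X_sub_C ((j:ℤ):ℝ)).leadingCoeff, mul_one]

lemma sum_w_eval (S : Finset ℤ) (n : ℕ) (hcard : S.card = n + 1) (p : ℝ[X])
    (hp : p.natDegree ≤ n) :
    ∑ s ∈ S, gw S s * p.eval (s : ℝ) = p.coeff n := by
  have hinj := injOn_cast S
  have hdeg : p.degree < (S.card : WithBot ℕ) := by
    refine lt_of_le_of_lt (degree_le_natDegree) ?_
    rw [hcard]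
    exact_mod_cast Nat.lt_succ_of_le hp
  have h := Lagrange.eq_interpolate hinj hdeg
  conv_rhs => rw [h]
  rw [Lagrange.interpolate_apply, Polynomial.finset_sum_coeff]
  refine Finset.sum_congr rfl fun i hi => ?_
  rw [coeff_C_mul]
  have : n = S.card - 1 := by omega
  rw [this, coeff_basis S hi, mul_comm]

lemma sum_w_pow (S : Finset ℤ) (n : ℕ) (hcard : S.card = n + 1) (m : ℕ) (hm : m ≤ n) :
    ∑ s ∈ S, gw S s * (s : ℝ) ^ m = if m = n then 1 else 0 := by
  have h := sum_w_eval S n hcard (X ^ m) (by simpa using hm)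
  simp only [eval_pow, eval_X, coeff_X_pow] at h
  rw [h]
  by_cases hmn : m = n
  · simp [hmn]
  · simp [hmn, Ne.symm hmn]



/-- total degree bound for elements of ℝ[X][Y] -/
def DegLe (p : Polynomial (Polynomial ℝ)) (d : ℕ) : Prop :=
  ∀ i j : ℕ, d < i + j → (p.coeff i).coeff j = 0

lemma DegLe.mono {p : Polynomial (Polynomial ℝ)} {m n : ℕ} (hp : DegLe p m) (h : m ≤ n) :
    DegLe p n := fun i j hij => hp i j (by omega)

lemma DegLe_one : DegLe 1 0 := by
  intro i j hij
  rw [Polynomial.coeff_one]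
  split
  · next h => rw [Polynomial.coeff_one, if_neg (by omega)]
  · simp

lemma DegLe_zero (d : ℕ) : DegLe 0 d := by intro i j _; simp

lemma DegLe.add {p q : Polynomial (Polynomial ℝ)} {m : ℕ} (hp : DegLe p m) (hq : DegLe q m) :
    DegLe (p + q) m := by
  intro i j h
  rw [coeff_add, coeff_add, hp _ _ h, hq _ _ h, add_zero]

lemma DegLe.neg {p : Polynomial (Polynomial ℝ)} {m : ℕ} (hp : DegLe p m) : DegLe (-p) m := by
  intro i j h
  rw [coeff_neg, coeff_neg, hp _ _ h, neg_zero]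

lemma DegLe.sub {p q : Polynomial (Polynomial ℝ)} {m : ℕ} (hp : DegLe p m) (hq : DegLe q m) :
    DegLe (p - q) m := by
  rw [sub_eq_add_neg]; exact hp.add hq.neg

lemma DegLe.mul {p q : Polynomial (Polynomial ℝ)} {m n : ℕ}
    (hp : DegLe p m) (hq : DegLe q n) : DegLe (p * q) (m + n) := by
  intro i j hij
  rw [coeff_mul, Polynomial.finset_sum_coeff]
  refine Finset.sum_eq_zero fun ab hab => ?_
  rw [coeff_mul]
  refine Finset.sum_eq_zero fun cd hcd => ?_
  rw [Finset.HasAntidiagonal.mem_antidiagonal] at hab hcd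
  by_cases h : m < ab.1 + cd.1
  · rw [hp _ _ h, zero_mul]
  · rw [hq _ _ (by omega), mul_zero]

lemma DegLe.pow {p : Polynomial (Polynomial ℝ)} {m : ℕ} (hp : DegLe p m) (t : ℕ) :
    DegLe (p ^ t) (m * t) := by
  induction t with
  | zero => simpa using DegLe_one
  | succ t ih =>
      rw [pow_succ, Nat.mul_succ]
      exact ih.mul hp

lemma DegLe.prod {ι : Type*} (s : Finset ι) (f : ι → Polynomial (Polynomial ℝ)) (d : ι → ℕ)
    (h : ∀ i ∈ s, DegLe (f i) (d i)) : DegLe (∏ i ∈ s, f i) (∑ i ∈ s, d i) := by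
  classical
  induction s using Finset.cons_induction with
  | empty => simpa using DegLe_one
  | cons a s ha ih =>
      rw [Finset.prod_cons, Finset.sum_cons]
      exact (h a (Finset.mem_cons_self a s)).mul
        (ih fun i hi => h i (Finset.mem_cons_of_mem hi))

lemma degLe_CC (r : ℝ) : DegLe (C (C r)) 0 := by
  intro i j h
  rw [coeff_C]
  split
  · next h0 => rw [coeff_C, if_neg (by omega)]
  · simp

lemma degLe_XX : DegLe (C X : Polynomial (Polynomial ℝ)) 1 := by
  intro i j h
  rw [coeff_C]
  split
  · next h0 => rw [Polynomial.coeff_X, if_neg (by omega)]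
  · simp

lemma degLe_YY : DegLe (X : Polynomial (Polynomial ℝ)) 1 := by
  intro i j h
  rw [Polynomial.coeff_X]
  split
  · next h0 => rw [Polynomial.coeff_one, if_neg (by omega)]
  · simp


noncomputable def qf (α β γ δ : ℕ → ℝ) (j : ℕ) : Polynomial (Polynomial ℝ) :=
  (C X - C (C (α j))) * (X - C (C (β j))) * (C X - X - C (C (γ j))) * (C X + X - C (C (δ j)))

noncomputable def Tf : Polynomial (Polynomial ℝ) := C X * X * (C X - X) * (C X + X)



lemma Tf_pow_expand (k : ℕ) : Tf ^ (2*k) = ∑ m ∈ range (2*k+1),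
    C (C ((-1:ℝ)^(2*k-m) * ((2*k).choose m : ℝ))) * C (X^(2*k+2*m)) * X^(2*k+2*(2*k-m)) := by
  have h0 : Tf = (C X * X) * ((C X)^2 - X^2) := by unfold Tf; ring
  rw [h0, mul_pow, sub_eq_add_neg, add_pow, Finset.mul_sum]
  refine Finset.sum_congr rfl fun m hm => ?_
  simp only [map_mul, map_pow, map_neg, map_one, map_natCast, pow_add]
  ring

lemma coeff_Tf_pow (k : ℕ) :
    (((Tf ^ (2*k)).coeff (4*k)).coeff (4*k)) = (-1:ℝ)^k * ((2*k).choose k : ℝ) := by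
  rw [Tf_pow_expand, finset_sum_coeff, finset_sum_coeff]
  have hterm : ∀ m ∈ range (2*k+1),
      ((C (C ((-1:ℝ)^(2*k-m) * ((2*k).choose m : ℝ))) * C (X^(2*k+2*m))
        * X^(2*k+2*(2*k-m))).coeff (4*k)).coeff (4*k)
      = if m = k then (-1:ℝ)^k * ((2*k).choose k : ℝ) else 0 := by
    intro m hm
    rw [mem_range] at hm
    rw [← C_mul, coeff_C_mul, coeff_X_pow]
    by_cases hmk : m = k
    · subst hmk
      rw [if_pos (by omega), mul_one, coeff_C_mul, coeff_X_pow, if_pos (by omega),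
        mul_one, if_pos rfl]
      have h2 : 2 * m - m = m := by omega
      rw [h2]
    · rw [if_neg (by omega), mul_zero, Polynomial.coeff_zero, if_neg hmk]
  rw [Finset.sum_congr rfl hterm, Finset.sum_ite_eq' (range (2*k+1)) k,
    if_pos (mem_range.mpr (by omega))]





lemma phi_eq (k : ℕ) (S : Finset ℤ) (hcard : S.card = 4*k+1)
    (p : Polynomial (Polynomial ℝ)) (hp : DegLe p (8*k)) :
    ∑ x ∈ S, ∑ y ∈ S, gw S x * gw S y * ((p.eval (C (y:ℝ))).eval (x:ℝ))
      = (p.coeff (4*k)).coeff (4*k) := by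
  have hdeg : p.natDegree ≤ 8*k := by
    rw [natDegree_le_iff_coeff_eq_zero]
    intro m hm
    exact Polynomial.ext fun j => hp m j (by omega)
  have heval : ∀ x y : ℤ, (p.eval (C (y:ℝ))).eval (x:ℝ)
      = ∑ i ∈ range (8*k+1), ((p.coeff i).eval (x:ℝ)) * (y:ℝ)^i := by
    intro x y
    rw [Polynomial.eval_eq_sum_range' (Nat.lt_succ_of_le hdeg), Polynomial.eval_finset_sum]
    refine Finset.sum_congr rfl fun i _ => ?_
    rw [← Polynomial.C_pow, Polynomial.eval_mul, Polynomial.eval_C]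
  have hcb : ∀ i : ℕ, 4*k ≤ i → (p.coeff i).natDegree ≤ 4*k := by
    intro i hi
    rw [natDegree_le_iff_coeff_eq_zero]
    intro j hj
    exact hp i j (by omega)
  calc ∑ x ∈ S, ∑ y ∈ S, gw S x * gw S y * ((p.eval (C (y:ℝ))).eval (x:ℝ))
      = ∑ x ∈ S, ∑ y ∈ S, ∑ i ∈ range (8*k+1),
          (gw S x * (p.coeff i).eval (x:ℝ)) * (gw S y * (y:ℝ)^i) := by
        refine Finset.sum_congr rfl fun x _ => Finset.sum_congr rfl fun y _ => ?_
        rw [heval, Finset.mul_sum]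
        exact Finset.sum_congr rfl fun i _ => by ring
    _ = ∑ x ∈ S, ∑ i ∈ range (8*k+1), ∑ y ∈ S,
          (gw S x * (p.coeff i).eval (x:ℝ)) * (gw S y * (y:ℝ)^i) :=
        Finset.sum_congr rfl fun x _ => Finset.sum_comm
    _ = ∑ i ∈ range (8*k+1), ∑ x ∈ S, ∑ y ∈ S,
          (gw S x * (p.coeff i).eval (x:ℝ)) * (gw S y * (y:ℝ)^i) :=
        Finset.sum_comm
    _ = ∑ i ∈ range (8*k+1),
          (∑ x ∈ S, gw S x * (p.coeff i).eval (x:ℝ)) * (∑ y ∈ S, gw S y * (y:ℝ)^i) := by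
        exact Finset.sum_congr rfl fun i _ => (Finset.sum_mul_sum _ _ _ _).symm
    _ = (p.coeff (4*k)).coeff (4*k) := by
        rw [Finset.sum_eq_single (4*k)]
        · rw [sum_w_eval S (4*k) hcard _ (hcb _ le_rfl),
            sum_w_pow S (4*k) hcard (4*k) le_rfl, if_pos rfl, mul_one]
        · intro i hi hne
          rcases lt_or_gt_of_ne hne with h | h
          · rw [sum_w_pow S (4*k) hcard i (le_of_lt h), if_neg hne, mul_zero]
          · rw [sum_w_eval S (4*k) hcard _ (hcb _ (le_of_lt h)),
              hp i (4*k) (by omega), zero_mul]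
        · intro h4k
          exact absurd (Finset.mem_range.mpr (by omega)) h4k







variable (α β γ δ : ℕ → ℝ)

lemma degLe_lin (r : ℝ) (p : Polynomial (Polynomial ℝ)) (hp : DegLe p 1) :
    DegLe (p - C (C r)) 1 := hp.sub ((degLe_CC r).mono (by omega))

lemma degLe_qf (j : ℕ) : DegLe (qf α β γ δ j) 4 := by
  unfold qf
  have h1 := degLe_lin (α j) _ degLe_XX
  have h2 := degLe_lin (β j) _ degLe_YY
  have h3 := degLe_lin (γ j) _ (degLe_XX.sub degLe_YY)
  have h4 := degLe_lin (δ j) _ (degLe_XX.add degLe_YY)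
  exact (((h1.mul h2).mul h3).mul h4).mono (by omega)

lemma degLe_Tf : DegLe Tf 4 := by
  unfold Tf
  exact (((degLe_XX.mul degLe_YY).mul (degLe_XX.sub degLe_YY)).mul
    (degLe_XX.add degLe_YY)).mono (by omega)

lemma degLe_qf_sub_Tf (j : ℕ) : DegLe (qf α β γ δ j - Tf) 3 := by
  have hdecomp : qf α β γ δ j - Tf =
      (-(C (C (α j)))) * ((X - C (C (β j))) * ((C X - X - C (C (γ j))) * (C X + X - C (C (δ j)))))
      + C X * ((-(C (C (β j)))) * ((C X - X - C (C (γ j))) * (C X + X - C (C (δ j)))))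
      + C X * X * ((-(C (C (γ j)))) * (C X + X - C (C (δ j))))
      + C X * X * (C X - X) * (-(C (C (δ j)))) := by
    unfold qf Tf; ring
  rw [hdecomp]
  have h2 := degLe_lin (β j) _ degLe_YY
  have h3 := degLe_lin (γ j) _ (degLe_XX.sub degLe_YY)
  have h4 := degLe_lin (δ j) _ (degLe_XX.add degLe_YY)
  refine DegLe.add (DegLe.add (DegLe.add ?_ ?_) ?_) ?_
  · exact ((degLe_CC (α j)).neg.mul (h2.mul (h3.mul h4))).mono (by omega)
  · exact (degLe_XX.mul ((degLe_CC (β j)).neg.mul (h3.mul h4))).mono (by omega)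
  · exact ((degLe_XX.mul degLe_YY).mul ((degLe_CC (γ j)).neg.mul h4)).mono (by omega)
  · exact (((degLe_XX.mul degLe_YY).mul (degLe_XX.sub degLe_YY)).mul
      (degLe_CC (δ j)).neg).mono (by omega)

lemma prod_sub_pow (s : Finset ℕ) :
    DegLe ((∏ j ∈ s, qf α β γ δ j) - Tf ^ s.card) (4 * s.card - 1) := by
  classical
  induction s using Finset.cons_induction with
  | empty => simpa using DegLe_zero 0
  | cons a s ha ih =>
      rw [Finset.prod_cons, Finset.card_cons, pow_succ]
      have key : qf α β γ δ a * ∏ j ∈ s, qf α β γ δ j - Tf ^ s.card * Tf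
          = qf α β γ δ a * ((∏ j ∈ s, qf α β γ δ j) - Tf ^ s.card)
            + (qf α β γ δ a - Tf) * Tf ^ s.card := by ring
      rw [key]
      rcases Finset.eq_empty_or_nonempty s with rfl | hs
      · simp only [Finset.prod_empty, Finset.card_empty, pow_zero, sub_self, mul_zero,
          zero_add, mul_one]
        exact (degLe_qf_sub_Tf α β γ δ a).mono (by norm_num)
      · have hc : 1 ≤ s.card := Finset.card_pos.mpr hs
        refine DegLe.add ?_ ?_
        · exact ((degLe_qf α β γ δ a).mul ih).mono (by omega)
        · exact ((degLe_qf_sub_Tf α β γ δ a).mul (degLe_Tf.pow s.card)).mono (by omega)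

end Stmt13Aux

theorem stmt_13 (k : ℕ) (hk : 1 ≤ k) (α β γ δ : ℕ → ℝ) :
    ¬ (∀ x y : ℤ, x ∈ Finset.Icc (-(2 * k : ℤ)) (2 * k) →
        y ∈ Finset.Icc (-(2 * k : ℤ)) (2 * k) →
        (∏ j ∈ Finset.Icc 1 (2 * k),
          ((x : ℝ) - α j) * ((y : ℝ) - β j) *
          ((x : ℝ) - (y : ℝ) - γ j) * ((x : ℝ) + (y : ℝ) - δ j)) = 0) := by
  intro H
  classical
  open Stmt13Aux in
  set S : Finset ℤ := Finset.Icc (-(2 * k : ℤ)) (2 * k) with hS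
  have hcard : S.card = 4 * k + 1 := by
    rw [hS, Int.card_Icc]
    omega
  set f : Polynomial (Polynomial ℝ) := ∏ j ∈ Finset.Icc 1 (2*k), Stmt13Aux.qf α β γ δ j with hf
  have hfdeg : Stmt13Aux.DegLe f (8*k) := by
    have h := Stmt13Aux.DegLe.prod (Finset.Icc 1 (2*k)) (Stmt13Aux.qf α β γ δ) (fun _ => 4)
      (fun j _ => Stmt13Aux.degLe_qf α β γ δ j)
    have hsum : ∑ _j ∈ Finset.Icc 1 (2*k), 4 = 8*k := by
      rw [Finset.sum_const, Nat.card_Icc, smul_eq_mul]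
      omega
    rw [hsum] at h
    exact h
  have hzero : ∑ x ∈ S, ∑ y ∈ S, gw S x * gw S y * ((f.eval (C (y:ℝ))).eval (x:ℝ)) = 0 := by
    refine Finset.sum_eq_zero fun x hx => Finset.sum_eq_zero fun y hy => ?_
    have hF : (f.eval (C (y:ℝ))).eval (x:ℝ) = ∏ j ∈ Finset.Icc 1 (2*k),
        ((x:ℝ) - α j) * ((y:ℝ) - β j) * ((x:ℝ) - (y:ℝ) - γ j) * ((x:ℝ) + (y:ℝ) - δ j) := by
      rw [hf]
      simp [Stmt13Aux.qf, Polynomial.eval_prod]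
    rw [hF, H x y hx hy, mul_zero]
  have h1 : (f.coeff (4*k)).coeff (4*k) = 0 := by
    rw [← Stmt13Aux.phi_eq k S hcard f hfdeg]
    exact hzero
  have h2 : (f.coeff (4*k)).coeff (4*k) = ((Stmt13Aux.Tf ^ (2*k)).coeff (4*k)).coeff (4*k) := by
    have hd := Stmt13Aux.prod_sub_pow α β γ δ (Finset.Icc 1 (2*k))
    have hcard2 : (Finset.Icc 1 (2*k)).card = 2*k := by
      rw [Nat.card_Icc]; omega
    rw [hcard2, ← hf] at hd
    have h0 := hd (4*k) (4*k) (by omega)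
    rw [Polynomial.coeff_sub, Polynomial.coeff_sub] at h0
    linarith [h0]
  rw [h1, Stmt13Aux.coeff_Tf_pow k] at h2
  have hpos : (0:ℝ) < ((2*k).choose k : ℝ) := by
    exact_mod_cast Nat.choose_pos (by omega)
  have hne : ((-1:ℝ)^k * ((2*k).choose k : ℝ)) ≠ 0 :=
    mul_ne_zero (pow_ne_zero _ (by norm_num)) (ne_of_gt hpos)
  exact hne h2.symm
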